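/- Let C and D be categories and F : C → D a functor. If C has the cofinal amalgamation property and F is cofinal and absorbing, then D has the cofinal amalgamation property. -/
import Mathlib


open CategoryTheory

universe v₁ v₂ u₁ u₂

/-- An object `A` is an amalgamation base if every span with vertex `A`
can be completed to a commutative square. -/
def IsAmalgamationBase {C : Type u₁} [Category.{v₁} C] (A : C) : Prop :=
  ∀ ⦃B X : C⦄ (α₁ : A ⟶ B) (α₂ : A ⟶ X),
    ∃ (W : C) (β₁ : B ⟶ W) (β₂ : X ⟶ W), α₁ ≫ β₁ = α₂ ≫ β₂

/-- The cofinal amalgamation property: every object admits a morphism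
into an amalgamation base. -/
def HasCAP (C : Type u₁) [Category.{v₁} C] : Prop :=
  ∀ A : C, ∃ (B : C) (_ : A ⟶ B), IsAmalgamationBase B

/-- A functor `F : C ⥤ D` is absorbing if every `D`-morphism out of `F(X)` can be
absorbed back: there are `f' : X ⟶ Y'` in `C` and `g : Y ⟶ F(Y')` with `F(f') = f ≫ g`. -/
def Absorbing {C : Type u₁} [Category.{v₁} C] {D : Type u₂} [Category.{v₂} D]
    (F : C ⥤ D) : Prop :=
  ∀ (X : C) (Y : D) (f : F.obj X ⟶ Y),
    ∃ (Y' : C) (f' : X ⟶ Y') (g : Y ⟶ F.obj Y'), F.map f' = f ≫ g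

/-- A functor `F : C ⥤ D` is cofinal if every `D`-object admits a morphism into
some `F(X)`. -/
def Cofinal {C : Type u₁} [Category.{v₁} C] {D : Type u₂} [Category.{v₂} D]
    (F : C ⥤ D) : Prop :=
  ∀ Y : D, ∃ X : C, Nonempty (Y ⟶ F.obj X)

/-- If `C` has the cofinal amalgamation property and `F : C ⥤ D` is cofinal and
absorbing, then `D` has the cofinal amalgamation property. -/
theorem stmt1 {C : Type u₁} [Category.{v₁} C] {D : Type u₂} [Category.{v₂} D]
    (F : C ⥤ D) (hC : HasCAP C) (hcof : Cofinal F) (habs : Absorbing F) :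
    HasCAP D := by
  intro A
  obtain ⟨X, ⟨h⟩⟩ := hcof A
  obtain ⟨B, b, hB⟩ := hC X
  refine ⟨F.obj B, h ≫ F.map b, ?_⟩
  intro Y₁ Y₂ α₁ α₂
  obtain ⟨Y₁', f₁', g₁, hg₁⟩ := habs B Y₁ α₁
  obtain ⟨Y₂', f₂', g₂, hg₂⟩ := habs B Y₂ α₂
  obtain ⟨W, β₁, β₂, hW⟩ := hB f₁' f₂'
  refine ⟨F.obj W, g₁ ≫ F.map β₁, g₂ ≫ F.map β₂, ?_⟩
  rw [← Category.assoc, ← hg₁, ← Category.assoc, ← hg₂, ← F.map_comp, ← F.map_comp, hW]
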